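/- Suppose h has a fixed point x* ∈ D_B, and let (x^k)_{k≥0} be any modified Jacobi-type iteration sequence: each x^k lies in D_B, and for every k ≥ 0 and every (i,j) ∈ S_B, the block X^{k+1}_{ij} of x^{k+1} equals H_{ij}(x^k) whenever either i ≠ j, or i = j and H_{jj}(x^k) is invertible (when i = j and H_{jj}(x^k) is singular, X^{k+1}_{jj} is an arbitrary invertible matrix). Then x^k = x* for all k ≥ |S_B|; that is, the modified Jacobi-type iteration converges in at most |S_B| = m/b² iterations from any initial guess x⁰ ∈ D_B. -/
import Mathlib


open Filter Topology

/-- The state space of block unknowns: one `b × b` block for each index pair in `S`. -/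
abbrev BlockVec (b N : ℕ) (S : Finset (Fin N × Fin N)) : Type :=
  {p : Fin N × Fin N // p ∈ S} → Fin b → Fin b → ℝ

/-- The block `X_{ij}` of the family `x`, with the convention `X_{ij} = 0` for
`(i,j) ∉ S`. -/
def Xf {b N : ℕ} (S : Finset (Fin N × Fin N)) (x : BlockVec b N S) (i j : Fin N) :
    Matrix (Fin b) (Fin b) ℝ :=
  if h : (i, j) ∈ S then Matrix.of (x ⟨(i, j), h⟩) else 0

/-- The block `H_{ij}(x)` of the block-ILU fixed point map: for `i > j` it is
`(A_{ij} - ∑_{k<j} X_{ik} X_{kj}) X_{jj}⁻¹`, and for `i ≤ j` it is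
`A_{ij} - ∑_{k<i} X_{ik} X_{kj}`. -/
noncomputable def Hmap {b N : ℕ} (S : Finset (Fin N × Fin N))
    (A : Fin N → Fin N → Matrix (Fin b) (Fin b) ℝ) (x : BlockVec b N S) (i j : Fin N) :
    Matrix (Fin b) (Fin b) ℝ :=
  if j < i then
    (A i j - ∑ k ∈ Finset.univ.filter (fun k : Fin N => k < j),
        Xf S x i k * Xf S x k j) * (Xf S x j j)⁻¹
  else
    A i j - ∑ k ∈ Finset.univ.filter (fun k : Fin N => k < i), Xf S x i k * Xf S x k j

/-- The block-ILU fixed point map `h`. -/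
noncomputable def hFun {b N : ℕ} (S : Finset (Fin N × Fin N))
    (A : Fin N → Fin N → Matrix (Fin b) (Fin b) ℝ) :
    BlockVec b N S → BlockVec b N S :=
  fun x p k l => Hmap S A x p.1.1 p.1.2 k l

/-- The domain of definition `D_B`: all diagonal blocks invertible. -/
def DB (b N : ℕ) (S : Finset (Fin N × Fin N)) : Set (BlockVec b N S) :=
  {x | ∀ j : Fin N, IsUnit (Xf S x j j)}

/-- Dependency level of a block index pair: diagonal blocks `(j,j)` get level `2j`,
off-diagonal blocks `(i,j)` get level `2·min i j + 1`. -/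
def lev {N : ℕ} (p : Fin N × Fin N) : ℕ :=
  if p.1 = p.2 then 2 * p.1.val else 2 * min p.1.val p.2.val + 1

lemma Hmap_congr {b N : ℕ} (S : Finset (Fin N × Fin N))
    (A : Fin N → Fin N → Matrix (Fin b) (Fin b) ℝ) (x y : BlockVec b N S) (i j : Fin N)
    (hag : ∀ i' j' : Fin N, lev (i', j') < lev (i, j) → Xf S x i' j' = Xf S y i' j') :
    Hmap S A x i j = Hmap S A y i j := by
  unfold Hmap
  split_ifs with hji
  · have hj : j.val < i.val := hji
    have hsum : ∑ k ∈ Finset.univ.filter (fun k : Fin N => k < j),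
        Xf S x i k * Xf S x k j =
        ∑ k ∈ Finset.univ.filter (fun k : Fin N => k < j),
        Xf S y i k * Xf S y k j := by
      apply Finset.sum_congr rfl
      intro k hk
      simp only [Finset.mem_filter] at hk
      have hkj : k.val < j.val := hk.2
      rw [hag i k (by simp only [lev, Fin.ext_iff]; split_ifs <;> omega),
        hag k j (by simp only [lev, Fin.ext_iff]; split_ifs <;> omega)]
    rw [hsum, hag j j (by simp only [lev, Fin.ext_iff]; split_ifs <;> omega)]
  · have hij : i.val ≤ j.val := not_lt.mp (by exact_mod_cast hji)
    have hsum : ∑ k ∈ Finset.univ.filter (fun k : Fin N => k < i),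
        Xf S x i k * Xf S x k j =
        ∑ k ∈ Finset.univ.filter (fun k : Fin N => k < i),
        Xf S y i k * Xf S y k j := by
      apply Finset.sum_congr rfl
      intro k hk
      simp only [Finset.mem_filter] at hk
      have hki : k.val < i.val := hk.2
      rw [hag i k (by simp only [lev, Fin.ext_iff]; split_ifs <;> omega),
        hag k j (by simp only [lev, Fin.ext_iff]; split_ifs <;> omega)]
    rw [hsum]

/-- If `h` has a fixed point `x* ∈ D_B`, then any modified Jacobi-type iteration
(where each iterate lies in `D_B`, every block is replaced by the corresponding block of
`h` except that a diagonal block is replaced by an arbitrary invertible matrix whenever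
the computed value would be singular) satisfies `x^k = x*` for all `k ≥ |S_B|`. -/
theorem modified_jacobi_blockILU_converges
    {b N : ℕ} (hb : 1 ≤ b) (hN : 1 ≤ N) (S : Finset (Fin N × Fin N))
    (hS : ∀ j : Fin N, (j, j) ∈ S)
    (A : Fin N → Fin N → Matrix (Fin b) (Fin b) ℝ)
    (xstar : BlockVec b N S) (hxstar : xstar ∈ DB b N S)
    (hfix : hFun S A xstar = xstar)
    (x : ℕ → BlockVec b N S)
    (hmem : ∀ k : ℕ, x k ∈ DB b N S)
    (hupd : ∀ (k : ℕ) (p : {p : Fin N × Fin N // p ∈ S}),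
      (p.1.1 ≠ p.1.2 ∨ IsUnit (Hmap S A (x k) p.1.1 p.1.2)) →
      ∀ a c : Fin b, x (k + 1) p a c = Hmap S A (x k) p.1.1 p.1.2 a c) :
    ∀ k : ℕ, S.card ≤ k → x k = xstar := by
  classical
  set μ : {p : Fin N × Fin N // p ∈ S} → ℕ :=
    fun p => (S.filter (fun q => lev q < lev p.1)).card with hμ
  have μlt : ∀ p, μ p < S.card := by
    intro p
    apply Finset.card_lt_card
    rw [Finset.ssubset_iff_of_subset (Finset.filter_subset _ _)]
    exact ⟨p.1, p.2, by simp⟩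
  have μmono : ∀ (p q : {p : Fin N × Fin N // p ∈ S}), lev q.1 < lev p.1 → μ q < μ p := by
    intro p q h
    apply Finset.card_lt_card
    rw [Finset.ssubset_iff_of_subset]
    · refine ⟨q.1, Finset.mem_filter.2 ⟨q.2, h⟩, by simp⟩
    · intro r hr
      simp only [Finset.mem_filter] at hr ⊢
      exact ⟨hr.1, hr.2.trans h⟩
  have hXfp : ∀ (z : BlockVec b N S) (p : {p : Fin N × Fin N // p ∈ S}),
      Xf S z p.1.1 p.1.2 = Matrix.of (z p) := by
    intro z p
    unfold Xf
    rw [dif_pos p.2]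
  have hstar : ∀ (p : {p : Fin N × Fin N // p ∈ S}),
      Hmap S A xstar p.1.1 p.1.2 = Matrix.of (xstar p) := by
    intro p
    funext a c
    exact congrFun (congrFun (congrFun hfix p) a) c
  have key : ∀ k : ℕ, ∀ p : {p : Fin N × Fin N // p ∈ S}, μ p < k → x k p = xstar p := by
    intro k
    induction k with
    | zero => intro p h; omega
    | succ k ih =>
      intro p hp
      have hXf : ∀ i' j' : Fin N, lev (i', j') < lev p.1 →
          Xf S (x k) i' j' = Xf S xstar i' j' := by
        intro i' j' hl
        unfold Xf
        split_ifs with hm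
        · exact congrArg _ (ih ⟨(i', j'), hm⟩
            (lt_of_lt_of_le (μmono p ⟨(i', j'), hm⟩ hl) (Nat.lt_succ_iff.mp hp)))
        · rfl
      have hH : Hmap S A (x k) p.1.1 p.1.2 = Matrix.of (xstar p) := by
        rw [Hmap_congr S A (x k) xstar p.1.1 p.1.2 (fun i' j' hl => hXf i' j' hl), hstar p]
      have hcond : p.1.1 ≠ p.1.2 ∨ IsUnit (Hmap S A (x k) p.1.1 p.1.2) := by
        by_cases hd : p.1.1 = p.1.2
        · right
          rw [hH]
          have hu := hxstar p.1.1
          have hpe : (⟨(p.1.1, p.1.1), hS p.1.1⟩ :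
              {p : Fin N × Fin N // p ∈ S}) = p := by
            apply Subtype.ext
            exact Prod.ext rfl hd
          rw [show Xf S xstar p.1.1 p.1.1 = Matrix.of (xstar p) from by
            unfold Xf; rw [dif_pos (hS p.1.1)]
            exact congrArg _ (congrArg xstar hpe)] at hu
          exact hu
        · left; exact hd
      funext a c
      rw [hupd k p hcond a c, hH]
      rfl
  intro k hk
  funext p
  exact key k p (lt_of_lt_of_le (μlt p) hk)
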